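/- For any continuous vector field v : ℝ^S → ℝ^S on a finite set S and any initial condition x₀ ∈ ℝ^S, there exists ε > 0 and a differentiable function x : (−ε, ε) → ℝ^S with x(0) = x₀ and x'(t) = v(x(t)) for all t ∈ (−ε, ε). -/

import Mathlib

open Set Filter Metric MeasureTheory
open scoped Topology NNReal


section InfConv

variable {α : Type*} [MetricSpace α] [Nonempty α]

noncomputable def infConv (f : α → ℝ) (c : ℝ) (x : α) : ℝ := ⨅ z, (f z + c * dist x z)

variable {f : α → ℝ} {M c : ℝ}

lemma infConv_bddBelow (hb : ∀ z, -M ≤ f z) (hc : 0 ≤ c) (x : α) :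
    BddBelow (Set.range fun z => f z + c * dist x z) := by
  refine ⟨-M, ?_⟩
  rintro _ ⟨z, rfl⟩
  have h := hb z
  show -M ≤ f z + c * dist x z
  nlinarith [dist_nonneg (x := x) (y := z)]

lemma infConv_le_self (hb : ∀ z, -M ≤ f z) (hc : 0 ≤ c) (x : α) : infConv f c x ≤ f x := by
  have h := ciInf_le (infConv_bddBelow hb hc x) x
  simpa [infConv] using h

lemma neg_le_infConv (hb : ∀ z, -M ≤ f z) (hc : 0 ≤ c) (x : α) : -M ≤ infConv f c x :=
  le_ciInf fun z => by nlinarith [dist_nonneg (x := x) (y := z), hb z]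

lemma infConv_lipschitz (hb : ∀ z, -M ≤ f z) (hc : 0 ≤ c) (x y : α) :
    infConv f c x ≤ infConv f c y + c * dist x y := by
  rw [infConv, ← sub_le_iff_le_add]
  refine le_ciInf fun z => ?_
  rw [sub_le_iff_le_add]
  calc infConv f c x ≤ f z + c * dist x z := ciInf_le (infConv_bddBelow hb hc x) z
    _ ≤ f z + c * dist y z + c * dist x y := by
        have h := dist_triangle x y z
        nlinarith

lemma infConv_tendstoUniformlyOn [ProperSpace α] {K : Set α} (hK : IsCompact K)
    (hf : Continuous f) (hb : ∀ z, |f z| ≤ M) :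
    TendstoUniformlyOn (fun (n : ℕ) x => infConv f (n + 1) x) f atTop K := by
  have hM0 : 0 ≤ M := le_trans (abs_nonneg _) (hb (Classical.arbitrary α))
  have hb' : ∀ z, -M ≤ f z := fun z => neg_le_of_abs_le (hb z)
  rw [Metric.tendstoUniformlyOn_iff]
  intro ε hε
  have hK2 : IsCompact (cthickening 1 K) := hK.cthickening
  have hfu : UniformContinuousOn f (cthickening 1 K) :=
    hK2.uniformContinuousOn_of_continuous hf.continuousOn
  rw [Metric.uniformContinuousOn_iff] at hfu
  obtain ⟨δ, hδ, hδ'⟩ := hfu (ε / 2) (half_pos hε)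
  set δ' := min δ 1 with hδ'def
  have hδ'0 : 0 < δ' := lt_min hδ zero_lt_one
  obtain ⟨N, hN⟩ := exists_nat_ge (2 * M / δ')
  filter_upwards [eventually_ge_atTop N] with n hn x hx
  have hc : (0:ℝ) ≤ (n:ℝ) + 1 := by positivity
  have h1 : infConv f ((n:ℝ) + 1) x ≤ f x := infConv_le_self hb' hc x
  have h2 : f x - ε / 2 ≤ infConv f ((n:ℝ) + 1) x := by
    refine le_ciInf fun z => ?_
    have hd0 : (0:ℝ) ≤ dist x z := dist_nonneg
    by_cases hdist : dist x z < δ'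
    · have hxK2 : x ∈ cthickening 1 K := self_subset_cthickening K hx
      have hzK2 : z ∈ cthickening 1 K := by
        apply mem_cthickening_of_dist_le z x 1 K hx
        calc dist z x = dist x z := dist_comm z x
          _ ≤ 1 := le_trans hdist.le (min_le_right _ _)
      have h3 := hδ' x hxK2 z hzK2 (lt_of_lt_of_le hdist (min_le_left _ _))
      rw [Real.dist_eq] at h3
      have h4 := abs_lt.mp h3
      nlinarith [mul_nonneg hc hd0]
    · push_neg at hdist
      have hn' : 2 * M / δ' ≤ (n:ℝ) := le_trans hN (by exact_mod_cast hn)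
      have h5 : 2 * M ≤ (n:ℝ) * δ' := by
        rw [div_le_iff₀ hδ'0] at hn'
        linarith
      have hfz := hb' z
      have hfx : f x ≤ M := le_of_abs_le (hb x)
      nlinarith
  rw [Real.dist_eq, abs_sub_lt_iff]
  constructor <;> [nlinarith; nlinarith]

end InfConv



section PeanoMain

set_option maxHeartbeats 1000000 in
/-- Peano existence: any continuous vector field on `ℝ^S`, `S` a
finite set, has a local solution through any initial condition. -/
theorem peano_existence (S : Type) [Fintype S]
    (v : (S → ℝ) → S → ℝ) (hv : Continuous v) (x₀ : S → ℝ) :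
    ∃ ε > (0 : ℝ), ∃ x : ℝ → S → ℝ, x 0 = x₀ ∧
      ∀ t ∈ Set.Ioo (-ε) ε, HasDerivAt x (v (x t)) t := by
  classical
  -- the radial retraction onto the closed unit ball around `x₀`
  set r : (S → ℝ) → (S → ℝ) := fun y => x₀ + (max 1 ‖y - x₀‖)⁻¹ • (y - x₀) with hr_def
  have hmax_pos : ∀ y : S → ℝ, (0:ℝ) < max 1 ‖y - x₀‖ := fun y => lt_max_iff.mpr (Or.inl one_pos)
  have hr_cont : Continuous r := by
    apply continuous_const.add
    exact ((continuous_const.max (continuous_id.sub continuous_const).norm).inv₀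
      (fun y => (hmax_pos y).ne')).smul (continuous_id.sub continuous_const)
  have hr_mem : ∀ y, r y ∈ closedBall x₀ 1 := by
    intro y
    rw [mem_closedBall, dist_eq_norm]
    have h1 : r y - x₀ = (max 1 ‖y - x₀‖)⁻¹ • (y - x₀) := by
      rw [hr_def]; exact add_sub_cancel_left x₀ _
    rw [h1, norm_smul, norm_inv, Real.norm_of_nonneg (le_of_lt (hmax_pos y))]
    rw [inv_mul_le_iff₀ (hmax_pos y), mul_one]
    exact le_max_right _ _
  have hr_eq : ∀ y ∈ closedBall x₀ 1, r y = y := by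
    intro y hy
    rw [mem_closedBall, dist_eq_norm] at hy
    rw [hr_def]
    simp only [max_eq_left hy, inv_one, one_smul]
    exact add_sub_cancel x₀ y
  set w : (S → ℝ) → (S → ℝ) := fun y => v (r y) with hw_def
  have hw_cont : Continuous w := hv.comp hr_cont
  -- a global bound for `w`
  obtain ⟨z₀, hz₀, hz₀max⟩ := (isCompact_closedBall x₀ 1).exists_isMaxOn
    (Metric.nonempty_closedBall.mpr zero_le_one) hv.norm.continuousOn
  rw [isMaxOn_iff] at hz₀max
  set M := ‖v z₀‖ with hM_def
  have hM0 : 0 ≤ M := norm_nonneg _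
  have hwM : ∀ y, ‖w y‖ ≤ M := fun y => hz₀max _ (hr_mem y)
  have hwMi : ∀ y i, |w y i| ≤ M := fun y i =>
    le_trans (by simpa using norm_le_pi_norm (w y) i) (hwM y)
  have hwMi' : ∀ y i, -M ≤ w y i := fun y i => neg_le_of_abs_le (hwMi y i)
  -- Lipschitz approximations of `w`
  set W : ℕ → (S → ℝ) → (S → ℝ) := fun n y i => infConv (fun z => w z i) ((n:ℝ) + 1) y with hW_def
  have hcn : ∀ n : ℕ, (0:ℝ) ≤ (n:ℝ) + 1 := fun n => by positivity
  have hWle : ∀ n y i, W n y i ≤ w y i := fun n y i =>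
    infConv_le_self (hwMi' · i) (hcn n) y
  have hWge : ∀ n y i, -M ≤ W n y i := fun n y i =>
    neg_le_infConv (hwMi' · i) (hcn n) y
  have hWM : ∀ n y, ‖W n y‖ ≤ M := by
    intro n y
    rw [pi_norm_le_iff_of_nonneg hM0]
    intro i
    rw [Real.norm_eq_abs, abs_le]
    exact ⟨hWge n y i, le_trans (hWle n y i) (le_of_abs_le (hwMi y i))⟩
  have hWlip : ∀ n : ℕ, LipschitzWith ((n:ℝ≥0) + 1) (W n) := by
    intro n
    apply LipschitzWith.of_dist_le_mul
    intro x y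
    rw [dist_pi_le_iff (by positivity)]
    intro i
    rw [Real.dist_eq, abs_le]
    have hxy := infConv_lipschitz (f := fun z => w z i) (hwMi' · i) (hcn n) x y
    have hyx := infConv_lipschitz (f := fun z => w z i) (hwMi' · i) (hcn n) y x
    rw [dist_comm y x] at hyx
    have hcast : ((((n:ℝ≥0) + 1) : ℝ≥0) : ℝ) = (n:ℝ) + 1 := by push_cast; ring
    rw [hcast]
    constructor <;> [linarith; linarith]
  have hWcont : ∀ n, Continuous (W n) := fun n => (hWlip n).continuous
  -- uniform convergence on the closed ball
  have hWconv : TendstoUniformlyOn W w atTop (closedBall x₀ 1) := by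
    rw [Metric.tendstoUniformlyOn_iff]
    intro ε hε
    have hcomp : ∀ i : S, ∀ᶠ n : ℕ in atTop, ∀ y ∈ closedBall x₀ 1,
        dist (w y i) (W n y i) < ε / 2 := by
      intro i
      have h := infConv_tendstoUniformlyOn (f := fun z => w z i)
        (isCompact_closedBall x₀ 1) ((continuous_apply i).comp hw_cont) (fun z => hwMi z i)
      rw [Metric.tendstoUniformlyOn_iff] at h
      exact h (ε / 2) (half_pos hε)
    filter_upwards [(Filter.eventually_all).mpr hcomp] with n hn y hy
    rw [dist_pi_lt_iff hε]
    intro i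
    exact lt_trans (hn i y hy) (half_lt_self hε)
  -- solve the ODE for each approximation via Picard-Lindelöf
  set ε := 1 / (M + 1) with hε_def
  have hε0 : 0 < ε := by rw [hε_def]; positivity
  have hMε : M * ε ≤ 1 := by
    rw [hε_def, mul_one_div, div_le_one (by positivity)]
    linarith
  have h0mem : (0:ℝ) ∈ Icc (-ε) ε := ⟨by linarith, by linarith⟩
  have hsol : ∀ n : ℕ, ∃ g : ℝ → S → ℝ, g 0 = x₀ ∧
      ∀ t ∈ Icc (-ε) ε, HasDerivWithinAt g (W n (g t)) (Icc (-ε) ε) t := by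
    intro n
    have hpl : IsPicardLindelof (fun _ : ℝ => W n) (tmin := -ε) (tmax := ε) ⟨0, h0mem⟩ x₀
        1 0 ⟨M, hM0⟩ ((n:ℝ≥0) + 1) :=
      { lipschitzOnWith := fun t _ => (hWlip n).lipschitzOnWith (s := closedBall x₀ 1)
        continuousOn := fun x _ => continuousOn_const
        norm_le := fun t _ x _ => hWM n x
        mul_max_le := by
          show M * max (ε - 0) (0 - -ε) ≤ ((1:ℝ≥0):ℝ) - ((0:ℝ≥0):ℝ)
          have : max (ε - 0) (0 - -ε) = ε := by
            rw [sub_zero, zero_sub, neg_neg, max_self]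
          rw [this]
          simpa using hMε }
    exact hpl.exists_eq_forall_mem_Icc_hasDerivWithinAt₀
  choose g hg0 hgderiv using hsol
  -- a priori estimates
  have hglip : ∀ n, ∀ a ∈ Icc (-ε) ε, ∀ b ∈ Icc (-ε) ε, ‖g n b - g n a‖ ≤ M * ‖b - a‖ := by
    intro n a ha b hb
    exact (convex_Icc (-ε) ε).norm_image_sub_le_of_norm_hasDerivWithin_le
      (fun t ht => hgderiv n t ht) (fun t _ => hWM n (g n t)) ha hb
  have hgball : ∀ n, ∀ t ∈ Icc (-ε) ε, g n t ∈ closedBall x₀ 1 := by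
    intro n t ht
    rw [mem_closedBall, dist_eq_norm]
    have h1 := hglip n 0 h0mem t ht
    rw [hg0 n] at h1
    have ht' : ‖t - 0‖ ≤ ε := by
      rw [sub_zero, Real.norm_eq_abs, abs_le]; exact ⟨ht.1, ht.2⟩
    calc ‖g n t - x₀‖ ≤ M * ‖t - 0‖ := h1
      _ ≤ M * ε := by nlinarith [norm_nonneg (t - (0:ℝ))]
      _ ≤ 1 := hMε
  have hgcont : ∀ n, ContinuousOn (g n) (Icc (-ε) ε) :=
    fun n t ht => (hgderiv n t ht).continuousWithinAt
  -- Arzelà–Ascoli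
  haveI : CompactSpace (Icc (-ε) ε) := isCompact_iff_compactSpace.mp isCompact_Icc
  set Fn : ℕ → C(Icc (-ε) ε, S → ℝ) := fun n =>
    ⟨fun t => g n t.1, (hgcont n).comp_continuous continuous_subtype_val (fun t => t.2)⟩
    with hFn_def
  set 𝒮 : Set C(Icc (-ε) ε, S → ℝ) := {F | (∀ t, F t ∈ closedBall x₀ 1) ∧
      ∀ a b, dist (F a) (F b) ≤ M * dist a b} with h𝒮_def
  have hFn𝒮 : ∀ n, Fn n ∈ 𝒮 := by
    intro n
    constructor
    · intro t; exact hgball n t.1 t.2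
    · intro a b
      rw [dist_eq_norm, Subtype.dist_eq, Real.dist_eq]
      have := hglip n b.1 b.2 a.1 a.2
      calc ‖g n a.1 - g n b.1‖ ≤ M * ‖a.1 - b.1‖ := this
        _ = M * |a.1 - b.1| := by rw [Real.norm_eq_abs]
  have h𝒮cpt : IsCompact 𝒮 := by
    apply ArzelaAscoli.isCompact_of_equicontinuous
    · have heq : (ContinuousMap.toFun '' 𝒮) = {h : Icc (-ε) ε → S → ℝ |
          (∀ t, h t ∈ closedBall x₀ 1) ∧ ∀ a b, dist (h a) (h b) ≤ M * dist a b} := by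
        ext h
        constructor
        · rintro ⟨F, hF, rfl⟩; exact hF
        · intro hh
          have hlip : LipschitzWith ⟨M, hM0⟩ h :=
            LipschitzWith.of_dist_le_mul fun a b => hh.2 a b
          exact ⟨⟨h, hlip.continuous⟩, hh, rfl⟩
      rw [heq]
      apply IsCompact.of_isClosed_subset
        (isCompact_univ_pi fun _ : Icc (-ε) ε => isCompact_closedBall x₀ 1)
      · rw [Set.setOf_and]
        apply IsClosed.inter
        · rw [Set.setOf_forall]
          exact isClosed_iInter fun t =>
            (isClosed_closedBall).preimage (continuous_apply t)
        · rw [Set.setOf_forall]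
          refine isClosed_iInter fun a => ?_
          rw [Set.setOf_forall]
          exact isClosed_iInter fun b =>
            isClosed_le ((continuous_apply a).dist (continuous_apply b)) continuous_const
      · intro h hh
        exact fun t _ => hh.1 t
    · apply UniformEquicontinuous.equicontinuous
      apply Metric.uniformEquicontinuous_of_continuity_modulus (fun s => M * s)
      · have : Tendsto (fun s : ℝ => M * s) (𝓝 0) (𝓝 (M * 0)) :=
          (tendsto_id.const_mul M)
        simpa using this
      · intro a b F
        exact F.2.2 a b
  obtain ⟨F, hF𝒮, φ, hφmono, hφtendsto⟩ := h𝒮cpt.tendsto_subseq hFn𝒮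
  rw [ContinuousMap.tendsto_iff_tendstoUniformly] at hφtendsto
  -- the limit candidate
  have hle : -ε ≤ ε := by linarith
  set x : ℝ → S → ℝ := fun t => F (projIcc (-ε) ε hle t) with hx_def
  have hx_cont : Continuous x := F.continuous.comp continuous_projIcc
  have hx_eq : ∀ t (ht : t ∈ Icc (-ε) ε), x t = F ⟨t, ht⟩ := by
    intro t ht
    rw [hx_def]
    simp only []
    rw [projIcc_of_mem hle ht]
  have hx_ball : ∀ t, x t ∈ closedBall x₀ 1 := fun t => hF𝒮.1 _
  have hptconv : ∀ t (ht : t ∈ Icc (-ε) ε),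
      Tendsto (fun k => g (φ k) t) atTop (𝓝 (x t)) := by
    intro t ht
    rw [hx_eq t ht]
    exact hφtendsto.tendsto_at ⟨t, ht⟩
  -- integral equation for the approximations
  have hWgcont : ∀ n, ContinuousOn (fun s => W n (g n s)) (Icc (-ε) ε) :=
    fun n => (hWcont n).comp_continuousOn (hgcont n)
  have hint : ∀ n, ∀ t ∈ Icc (-ε) ε, g n t = x₀ + ∫ s in (0:ℝ)..t, W n (g n s) := by
    intro n t ht
    rcases le_total 0 t with h0t | ht0
    · have hsub : Icc (0:ℝ) t ⊆ Icc (-ε) ε := Icc_subset_Icc (by linarith) ht.2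
      have key := intervalIntegral.integral_eq_sub_of_hasDeriv_right_of_le h0t
        ((hgcont n).mono hsub)
        (fun s hs => ((hgderiv n s ⟨by linarith [hs.1], by linarith [hs.2, ht.2]⟩).hasDerivAt
          (Icc_mem_nhds (by linarith [hs.1]) (by linarith [hs.2, ht.2]))).hasDerivWithinAt)
        (((hWgcont n).mono hsub).intervalIntegrable_of_Icc h0t)
      rw [key, hg0 n]
      abel
    · have hsub : Icc t (0:ℝ) ⊆ Icc (-ε) ε := Icc_subset_Icc ht.1 (by linarith)
      have key := intervalIntegral.integral_eq_sub_of_hasDeriv_right_of_le ht0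
        ((hgcont n).mono hsub)
        (fun s hs => ((hgderiv n s ⟨by linarith [hs.1, ht.1], by linarith [hs.2]⟩).hasDerivAt
          (Icc_mem_nhds (by linarith [hs.1, ht.1]) (by linarith [hs.2]))).hasDerivWithinAt)
        (((hWgcont n).mono hsub).intervalIntegrable_of_Icc ht0)
      rw [intervalIntegral.integral_symm t 0, key, hg0 n]
      abel
  -- pass to the limit in the integral equation
  have hWφ : TendstoUniformlyOn (fun k => W (φ k)) w atTop (closedBall x₀ 1) :=
    fun u hu => (hφmono.tendsto_atTop).eventually (hWconv u hu)
  have hlim : ∀ t (ht : t ∈ Icc (-ε) ε), x t = x₀ + ∫ s in (0:ℝ)..t, w (x s) := by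
    intro t ht
    have h1 : Tendsto (fun k => g (φ k) t) atTop (𝓝 (x t)) := hptconv t ht
    have h2 : Tendsto (fun k => x₀ + ∫ s in (0:ℝ)..t, W (φ k) (g (φ k) s)) atTop
        (𝓝 (x₀ + ∫ s in (0:ℝ)..t, w (x s))) := by
      apply Tendsto.const_add
      have huIoc : Set.uIoc (0:ℝ) t ⊆ Icc (-ε) ε := by
        intro s hs
        rcases Set.mem_uIoc.mp hs with h | h
        · exact ⟨by linarith [h.1], by linarith [h.2, ht.2]⟩
        · exact ⟨by linarith [h.1, ht.1], by linarith [h.2]⟩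
      apply intervalIntegral.tendsto_integral_filter_of_dominated_convergence
        (bound := fun _ => M)
      · exact Filter.Eventually.of_forall fun k =>
          ((hWgcont (φ k)).mono huIoc).aestronglyMeasurable measurableSet_uIoc
      · exact Filter.Eventually.of_forall fun k =>
          Filter.Eventually.of_forall fun s _ => hWM (φ k) (g (φ k) s)
      · exact intervalIntegrable_const
      · apply Filter.Eventually.of_forall
        intro s hs
        have hsIcc := huIoc hs
        have hgs : Tendsto (fun k => g (φ k) s) atTop (𝓝 (x s)) := hptconv s hsIcc
        have hgmem : ∀ k, g (φ k) s ∈ closedBall x₀ 1 := fun k => hgball (φ k) s hsIcc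
        exact hWφ.tendsto_comp (hw_cont.continuousAt.continuousWithinAt)
          (tendsto_nhdsWithin_of_tendsto_nhds_of_eventually_within _ hgs
            (Filter.Eventually.of_forall hgmem))
    have h3 : (fun k => g (φ k) t) = fun k => x₀ + ∫ s in (0:ℝ)..t, W (φ k) (g (φ k) s) := by
      funext k
      exact hint (φ k) t ht
    rw [h3] at h1
    exact tendsto_nhds_unique h1 h2
  -- conclusion
  refine ⟨ε, hε0, x, ?_, ?_⟩
  · have h := hlim 0 h0mem
    simpa using h
  · intro t ht
    have htIcc : Icc (-ε) ε ∈ 𝓝 t := Icc_mem_nhds ht.1 ht.2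
    have hy_cont : Continuous (fun s => w (x s)) := hw_cont.comp hx_cont
    have hG : HasDerivAt (fun u => x₀ + ∫ s in (0:ℝ)..u, w (x s)) (w (x t)) t := by
      apply HasDerivAt.const_add
      exact intervalIntegral.integral_hasDerivAt_right (hy_cont.intervalIntegrable _ _)
        (hy_cont.stronglyMeasurableAtFilter _ _) hy_cont.continuousAt
    have hxG : x =ᶠ[𝓝 t] fun u => x₀ + ∫ s in (0:ℝ)..u, w (x s) :=
      Filter.eventuallyEq_of_mem htIcc (fun s hs => hlim s hs)
    have hderiv : HasDerivAt x (w (x t)) t := hG.congr_of_eventuallyEq hxG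
    have hxt : w (x t) = v (x t) := by
      rw [hw_def]
      simp only []
      rw [hr_eq _ (hx_ball t)]
    rwa [hxt] at hderiv

end PeanoMain
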